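/- Let K ⊆ Z be a closed convex cone with nonempty interior in a Banach space Z and e ∈ int K. Then the scalarization functional s_e(z) = inf{λ ∈ ℝ : λe ∈ z + K} is Lipschitz on Z with constant d(e, bd K)⁻¹, where bd K is the topological boundary of K: |s_e(z) − s_e(w)| ≤ d(e, bd K)⁻¹ · ‖z − w‖ for all z, w ∈ Z. -/

import Mathlib

open Metric Set

/-- The Gerstewitz/Tammer scalarization functional `s_e(z) = inf {λ : λ•e - z ∈ K}`. -/
noncomputable def scalFn {Z : Type*} [NormedAddCommGroup Z] [NormedSpace ℝ Z]
    (K : Set Z) (e : Z) (z : Z) : ℝ :=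
  sInf {l : ℝ | l • e - z ∈ K}

section Aux

variable {Z : Type*} [NormedAddCommGroup Z] [NormedSpace ℝ Z]

/-- The ball around an interior point with radius `infDist` to the frontier is in `K`. -/
lemma aux_ball_subset (K : Set Z) (hKcl : IsClosed K) (e : Z) (heK : e ∈ K) :
    Metric.ball e (Metric.infDist e (frontier K)) ⊆ K := by
  intro x hx
  by_contra hxK
  set d := Metric.infDist e (frontier K) with hd
  set g : ℝ → Z := fun t => e + t • (x - e) with hg
  have hgc : Continuous g := by fun_prop
  set S : Set ℝ := Set.Icc 0 1 ∩ g ⁻¹' K with hS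
  have hScl : IsClosed S := isClosed_Icc.inter (hKcl.preimage hgc)
  have h0S : (0 : ℝ) ∈ S := by
    constructor
    · exact ⟨le_refl 0, zero_le_one⟩
    · simp [hg, heK]
  have hSbdd : BddAbove S := BddAbove.mono (Set.inter_subset_left) bddAbove_Icc
  set t₀ := sSup S with ht₀
  have ht₀S : t₀ ∈ S := hScl.csSup_mem ⟨0, h0S⟩ hSbdd
  have hg1 : g 1 = x := by simp [hg]
  have ht₀lt1 : t₀ < 1 := by
    rcases lt_or_eq_of_le ht₀S.1.2 with h | h
    · exact h
    · exfalso; apply hxK; rw [← hg1, ← h]; exact ht₀S.2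
  have hnotint : g t₀ ∉ interior K := by
    intro hint
    have hnh : g ⁻¹' interior K ∈ nhds t₀ :=
      hgc.continuousAt.preimage_mem_nhds (isOpen_interior.mem_nhds hint)
    rcases Metric.mem_nhds_iff.1 hnh with ⟨δ, hδ, hδsub⟩
    set t₁ := t₀ + min (δ / 2) ((1 - t₀) / 2) with ht₁
    have hmpos : 0 < min (δ / 2) ((1 - t₀) / 2) := by
      apply lt_min (by linarith) (by linarith)
    have ht₁S : t₁ ∈ S := by
      constructor
      · constructor
        · have := ht₀S.1.1; simp only [ht₁]; linarith
        · have : min (δ / 2) ((1 - t₀) / 2) ≤ (1 - t₀) / 2 := min_le_right _ _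
          simp only [ht₁]; linarith
      · have ht₁b : t₁ ∈ Metric.ball t₀ δ := by
          simp only [Metric.mem_ball, Real.dist_eq, ht₁]
          rw [add_sub_cancel_left, abs_of_pos hmpos]
          have : min (δ / 2) ((1 - t₀) / 2) ≤ δ / 2 := min_le_left _ _
          linarith
        exact Set.preimage_mono interior_subset (hδsub ht₁b)
    have hle : t₁ ≤ t₀ := le_csSup hSbdd ht₁S
    rw [ht₁] at hle
    linarith
  have hfr : g t₀ ∈ frontier K := by
    rw [hKcl.frontier_eq]
    exact ⟨ht₀S.2, hnotint⟩
  have hled : d ≤ dist e (g t₀) := Metric.infDist_le_dist_of_mem hfr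
  have hdist : dist e (g t₀) = t₀ * ‖x - e‖ := by
    rw [dist_eq_norm]
    simp only [hg]
    rw [show e - (e + t₀ • (x - e)) = -(t₀ • (x - e)) by abel, norm_neg, norm_smul,
      Real.norm_eq_abs, abs_of_nonneg ht₀S.1.1]
  have hxd : dist x e < d := hx
  rw [dist_eq_norm] at hxd
  have : t₀ * ‖x - e‖ ≤ ‖x - e‖ := by
    nlinarith [norm_nonneg (x - e), ht₀S.1.1, ht₀lt1.le]
  linarith [hled, hdist ▸ hled]

end Aux

/-- The scalarization functional is globally Lipschitz with constant
`d(e, bd K)⁻¹`. -/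
theorem scalFn_lipschitz
    {Z : Type*} [NormedAddCommGroup Z] [NormedSpace ℝ Z] [CompleteSpace Z]
    (K : Set Z) (hKcl : IsClosed K) (hKconv : Convex ℝ K)
    (hKcone : ∀ t : ℝ, 0 ≤ t → ∀ z ∈ K, t • z ∈ K)
    (hKprop : K ≠ Set.univ) (e : Z) (he : e ∈ interior K) :
    ∀ z w : Z,
      |scalFn K e z - scalFn K e w| ≤ (Metric.infDist e (frontier K))⁻¹ * ‖z - w‖ := by
  have heK : e ∈ K := interior_subset he
  have h0K : (0 : Z) ∈ K := by simpa using hKcone 0 le_rfl e heK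
  set d := Metric.infDist e (frontier K) with hd
  -- frontier nonempty and d > 0
  have hfr : (frontier K).Nonempty := nonempty_frontier_iff.2 ⟨⟨e, heK⟩, hKprop⟩
  have hdpos : 0 < d := by
    rw [hd, ← isClosed_frontier.notMem_iff_infDist_pos hfr]
    intro h
    exact h.2 he
  -- closed ball inside K
  have hball : Metric.ball e d ⊆ K := aux_ball_subset K hKcl e heK
  have hcball : Metric.closedBall e d ⊆ K := by
    rw [← closure_ball e hdpos.ne']
    exact closure_minimal hball hKcl
  -- additivity of K
  have hKadd : ∀ x ∈ K, ∀ y ∈ K, x + y ∈ K := by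
    intro x hx y hy
    have h2 : (1/2 : ℝ) • x + (1/2 : ℝ) • y ∈ K :=
      hKconv hx hy (by norm_num) (by norm_num) (by norm_num)
    have := hKcone 2 (by norm_num) _ h2
    simpa [smul_add, smul_smul] using this
  -- key membership: (d⁻¹ * ‖u‖) • e - u ∈ K
  have hkey : ∀ u : Z, (d⁻¹ * ‖u‖) • e - u ∈ K := by
    intro u
    rcases eq_or_ne u 0 with rfl | hu
    · simpa using h0K
    · set c := d⁻¹ * ‖u‖ with hc
      have hcpos : 0 < c := mul_pos (inv_pos.2 hdpos) (norm_pos_iff.2 hu)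
      have hmem : e - c⁻¹ • u ∈ Metric.closedBall e d := by
        rw [Metric.mem_closedBall, dist_eq_norm]
        rw [show e - c⁻¹ • u - e = -(c⁻¹ • u) by abel, norm_neg, norm_smul, Real.norm_eq_abs,
          abs_of_pos (inv_pos.2 hcpos), hc, mul_inv, inv_inv]
        rw [mul_assoc, inv_mul_cancel₀ (norm_ne_zero_iff.2 hu)]
        simp
      have := hKcone c hcpos.le _ (hcball hmem)
      rwa [smul_sub, smul_inv_smul₀ hcpos.ne'] at this
  -- nonemptiness of the defining sets
  have hne : ∀ z : Z, {l : ℝ | l • e - z ∈ K}.Nonempty :=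
    fun z => ⟨d⁻¹ * ‖z‖, hkey z⟩
  -- boundedness below
  have hbdd : ∀ z : Z, BddBelow {l : ℝ | l • e - z ∈ K} := by
    intro z
    refine ⟨-(2 * d⁻¹ * ‖z‖ + 1), fun l hl => ?_⟩
    by_contra hlt
    push_neg at hlt
    have hlneg : l < 0 := by
      have : 0 ≤ 2 * d⁻¹ * ‖z‖ := by positivity
      linarith
    -- y = -e - u ∈ K with ‖u‖ ≤ d/2
    set u := (-l)⁻¹ • z with hu
    have hlpos : (0:ℝ) < -l := by linarith
    have hy : -e - u ∈ K := by
      have hml : (-l)⁻¹ * l = -1 := by field_simp; rw [div_self hlneg.ne]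
      have := hKcone (-l)⁻¹ (inv_pos.2 hlpos).le _ hl
      rw [smul_sub, smul_smul, hml, neg_one_smul] at this
      rw [hu]
      exact this
    have hunorm : ‖u‖ ≤ d / 2 := by
      rw [hu, norm_smul, Real.norm_eq_abs, abs_of_pos (inv_pos.2 hlpos)]
      rw [inv_mul_le_iff₀ hlpos]
      have h1 : 2 * d⁻¹ * ‖z‖ + 1 < -l := by linarith
      have h2 : d / 2 * (2 * d⁻¹ * ‖z‖ + 1) ≤ d / 2 * (-l) := by
        apply mul_le_mul_of_nonneg_left h1.le (by positivity)
      have h3 : d / 2 * (2 * d⁻¹ * ‖z‖) = ‖z‖ := by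
        field_simp
      nlinarith [hdpos]
    -- then closedBall 0 (d/2) ⊆ K, so K = univ
    have hsmall : Metric.closedBall (0 : Z) (d / 2) ⊆ K := by
      intro v hv
      rw [Metric.mem_closedBall, dist_zero_right] at hv
      have hmem : e + u + v ∈ Metric.closedBall e d := by
        rw [Metric.mem_closedBall, dist_eq_norm,
          show e + u + v - e = u + v by abel]
        calc ‖u + v‖ ≤ ‖u‖ + ‖v‖ := norm_add_le _ _
          _ ≤ d / 2 + d / 2 := add_le_add hunorm hv
          _ = d := by ring
      have := hKadd _ hy _ (hcball hmem)
      rwa [show -e - u + (e + u + v) = v by abel] at this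
    apply hKprop
    ext v
    simp only [Set.mem_univ, iff_true]
    rcases eq_or_ne v 0 with rfl | hv
    · exact h0K
    · have hs : (0:ℝ) < d / 2 * ‖v‖⁻¹ :=
        mul_pos (by positivity) (inv_pos.2 (norm_pos_iff.2 hv))
      have hmem : (d / 2 * ‖v‖⁻¹) • v ∈ Metric.closedBall (0 : Z) (d / 2) := by
        rw [Metric.mem_closedBall, dist_zero_right, norm_smul, Real.norm_eq_abs,
          abs_of_pos hs, mul_assoc, inv_mul_cancel₀ (norm_ne_zero_iff.2 hv), mul_one]
      have := hKcone (d / 2 * ‖v‖⁻¹)⁻¹ (inv_pos.2 hs).le _ (hsmall hmem)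
      rwa [inv_smul_smul₀ hs.ne'] at this
  -- the main one-sided estimate
  have hmain : ∀ z w : Z, scalFn K e z ≤ scalFn K e w + d⁻¹ * ‖z - w‖ := by
    intro z w
    unfold scalFn
    rw [← sub_le_iff_le_add]
    apply le_csInf (hne w)
    intro l hl
    rw [sub_le_iff_le_add]
    apply csInf_le (hbdd z)
    show (l + d⁻¹ * ‖z - w‖) • e - z ∈ K
    have heq : (l + d⁻¹ * ‖z - w‖) • e - z
        = (l • e - w) + ((d⁻¹ * ‖z - w‖) • e - (z - w)) := by
      rw [add_smul]; abel
    rw [heq]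
    exact hKadd _ hl _ (hkey (z - w))
  intro z w
  rw [abs_sub_le_iff]
  constructor
  · linarith [hmain z w]
  · have := hmain w z
    rw [norm_sub_rev] at this
    linarith
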